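/- If sequences (p_n) and (q_n) both satisfy the recurrence (n+2)³ y_{n+2} − (2n+3)(17n²+51n+39) y_{n+1} + (n+1)³ y_n = 0 with p_0 = 0, p_1 = 6, q_0 = 1, q_1 = 5, then for all n ≥ 1, p_n q_{n−1} − p_{n−1} q_n = 6/n³. -/
import Mathlib

theorem apery_determinant (p q : ℕ → ℚ)
    (hp : ∀ n : ℕ, ((n : ℚ) + 2) ^ 3 * p (n + 2)
        - (2 * (n : ℚ) + 3) * (17 * (n : ℚ) ^ 2 + 51 * n + 39) * p (n + 1)
        + ((n : ℚ) + 1) ^ 3 * p n = 0)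
    (hq : ∀ n : ℕ, ((n : ℚ) + 2) ^ 3 * q (n + 2)
        - (2 * (n : ℚ) + 3) * (17 * (n : ℚ) ^ 2 + 51 * n + 39) * q (n + 1)
        + ((n : ℚ) + 1) ^ 3 * q n = 0)
    (hp0 : p 0 = 0) (hp1 : p 1 = 6) (hq0 : q 0 = 1) (hq1 : q 1 = 5) :
    ∀ n : ℕ, 1 ≤ n → p n * q (n - 1) - p (n - 1) * q n = 6 / (n : ℚ) ^ 3 := by
  have key : ∀ n : ℕ, p (n + 1) * q n - p n * q (n + 1) = 6 / ((n : ℚ) + 1) ^ 3 := by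
    intro n
    induction n with
    | zero => simp [hp0, hp1, hq0, hq1]
    | succ m ih =>
      have hpm := hp m
      have hqm := hq m
      have hne : ((m : ℚ) + 2) ^ 3 ≠ 0 := by positivity
      have hne1 : ((m : ℚ) + 1) ^ 3 ≠ 0 := by positivity
      have step : ((m : ℚ) + 2) ^ 3 * (p (m + 2) * q (m + 1) - p (m + 1) * q (m + 2))
          = ((m : ℚ) + 1) ^ 3 * (p (m + 1) * q m - p m * q (m + 1)) := by
        linear_combination q (m + 1) * hpm - p (m + 1) * hqm
      have : p (m + 2) * q (m + 1) - p (m + 1) * q (m + 2)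
          = ((m : ℚ) + 1) ^ 3 * (6 / ((m : ℚ) + 1) ^ 3) / ((m : ℚ) + 2) ^ 3 := by
        rw [← ih]
        field_simp at step ⊢
        linarith [step]
      rw [this]
      push_cast
      field_simp
      ring
  intro n hn
  obtain ⟨m, rfl⟩ := Nat.exists_eq_add_of_le hn
  simpa [add_comm] using key m
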